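/- For the map A ↦ Γ(A) = (Id ⊗ A)(|Ψ_0⟩⟨Ψ_0|) and a state σ_n = Σ_{y,z} α_{y,z}|Ψ_y⟩⟨Ψ_z|, one has Γ(Λ_{σ_n}) = σ_n if and only if the matrix (α_{y,z}) is diagonal, i.e., α_{y,z} = 0 for all y ≠ z. -/

import Mathlib

open Matrix Kronecker BigOperators Finset ComplexOrder

noncomputable def Xmat (d : ℕ) : Matrix (ZMod d) (ZMod d) ℂ :=
  Matrix.of fun r c => if r = c - 1 then 1 else 0

noncomputable def Zmat (d : ℕ) (ω : ℂ) : Matrix (ZMod d) (ZMod d) ℂ :=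
  Matrix.of fun r c => if r = c then ω ^ c.val else 0

/-- The Weyl operator `N_(i,j) = X^i Z^j`. -/
noncomputable def weyl (d : ℕ) [NeZero d] (ω : ℂ) (u : ZMod d × ZMod d) : Matrix (ZMod d) (ZMod d) ℂ :=
  Xmat d ^ u.1.val * Zmat d ω ^ u.2.val

/-- Tensor-product Weyl operator on `H^{⊗n}`. -/
noncomputable def weylT (d n : ℕ) [NeZero d] (ω : ℂ) (x : Fin n → ZMod d × ZMod d) :
    Matrix (Fin n → ZMod d) (Fin n → ZMod d) ℂ :=
  Matrix.of fun m l => ∏ i, weyl d ω (x i) (m i) (l i)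

/-- Symplectic form on `(ℤ/d)^{2n}`. -/
def symp {d n : ℕ} (y y' : Fin n → ZMod d × ZMod d) : ZMod d :=
  ∑ i, ((y i).1 * (y' i).2 - (y i).2 * (y' i).1)

/-- Generalized Bell vector `|Ψ_y⟩ = d^{-n/2} ∑_l |l⟩ ⊗ N_y |l⟩`. -/
noncomputable def bell (d n : ℕ) [NeZero d] (ω : ℂ) (y : Fin n → ZMod d × ZMod d) :
    (Fin n → ZMod d) × (Fin n → ZMod d) → ℂ :=
  fun p => (Real.sqrt (d ^ n) : ℂ)⁻¹ * weylT d n ω y p.2 p.1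

/-- `|Ψ'_x⟩ = d^{-n/2} ∑_l N_x |l⟩ ⊗ |l⟩`. -/
noncomputable def bell' (d n : ℕ) [NeZero d] (ω : ℂ) (x : Fin n → ZMod d × ZMod d) :
    (Fin n → ZMod d) × (Fin n → ZMod d) → ℂ :=
  fun p => (Real.sqrt (d ^ n) : ℂ)⁻¹ * weylT d n ω x p.1 p.2

/-- `⟨Ψ_x| σ |Ψ_x⟩`. -/
noncomputable def braket (d n : ℕ) [NeZero d] (ω : ℂ)
    (σ : Matrix ((Fin n → ZMod d) × (Fin n → ZMod d)) ((Fin n → ZMod d) × (Fin n → ZMod d)) ℂ)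
    (x : Fin n → ZMod d × ZMod d) : ℂ :=
  dotProduct (star (bell d n ω x)) (σ.mulVec (bell d n ω x))

/-- The teleportation channel `Λ_σ(ρ) = ∑_x ⟨Ψ_x|σ|Ψ_x⟩ N_x ρ N_x†`. -/
noncomputable def telechan (d n : ℕ) [NeZero d] (ω : ℂ)
    (σ : Matrix ((Fin n → ZMod d) × (Fin n → ZMod d)) ((Fin n → ZMod d) × (Fin n → ZMod d)) ℂ)
    (ρ : Matrix (Fin n → ZMod d) (Fin n → ZMod d) ℂ) :
    Matrix (Fin n → ZMod d) (Fin n → ZMod d) ℂ :=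
  ∑ x : Fin n → ZMod d × ZMod d, braket d n ω σ x • (weylT d n ω x * ρ * (weylT d n ω x)ᴴ)

/-- Kraus operator `T_x = |Ψ'_x⟩⟨Ψ'_x| ⊗ N_x` on `(T⊗A)⊗B`. -/
noncomputable def kraus (d n : ℕ) [NeZero d] (ω : ℂ) (x : Fin n → ZMod d × ZMod d) :
    Matrix (((Fin n → ZMod d) × (Fin n → ZMod d)) × (Fin n → ZMod d))
           (((Fin n → ZMod d) × (Fin n → ZMod d)) × (Fin n → ZMod d)) ℂ :=
  Matrix.of fun p q => bell' d n ω x p.1 * star (bell' d n ω x q.1) * weylT d n ω x p.2 q.2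

/-- `ρ ⊗ σ` on `(T⊗A)⊗B` (ρ on T, σ on A⊗B). -/
noncomputable def tensorTAB (d n : ℕ)
    (ρ : Matrix (Fin n → ZMod d) (Fin n → ZMod d) ℂ)
    (σ : Matrix ((Fin n → ZMod d) × (Fin n → ZMod d)) ((Fin n → ZMod d) × (Fin n → ZMod d)) ℂ) :
    Matrix (((Fin n → ZMod d) × (Fin n → ZMod d)) × (Fin n → ZMod d))
           (((Fin n → ZMod d) × (Fin n → ZMod d)) × (Fin n → ZMod d)) ℂ :=
  Matrix.of fun p q => ρ p.1.1 q.1.1 * σ (p.1.2, p.2) (q.1.2, q.2)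

/-- Partial trace over the first two subsystems (T and A). -/
noncomputable def ptraceTA (d n : ℕ) [NeZero d]
    (M : Matrix (((Fin n → ZMod d) × (Fin n → ZMod d)) × (Fin n → ZMod d))
               (((Fin n → ZMod d) × (Fin n → ZMod d)) × (Fin n → ZMod d)) ℂ) :
    Matrix (Fin n → ZMod d) (Fin n → ZMod d) ℂ :=
  Matrix.of fun b b' => ∑ t : Fin n → ZMod d, ∑ a : Fin n → ZMod d, M ((t, a), b) ((t, a), b')

lemma Xpow (d : ℕ) [NeZero d] (k : ℕ) (r c : ZMod d) :
    (Xmat d ^ k) r c = if r + (k : ZMod d) = c then 1 else 0 := by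
  induction k generalizing r c with
  | zero => simp [Matrix.one_apply]
  | succ k ih =>
    rw [pow_succ, Matrix.mul_apply]
    have hX : ∀ a b : ZMod d, Xmat d a b = if a = b - 1 then 1 else 0 := fun _ _ => rfl
    simp only [ih, hX]
    rw [Finset.sum_eq_single (c - 1)]
    · rw [if_pos rfl, mul_one]
      congr 1
      rw [eq_sub_iff_add_eq]
      push_cast
      rw [add_assoc]
    · intro b _ hb
      rw [if_neg hb, mul_zero]
    · simp

lemma Zpow (d : ℕ) [NeZero d] (ω : ℂ) (k : ℕ) (r c : ZMod d) :
    (Zmat d ω ^ k) r c = if r = c then ω ^ (k * c.val) else 0 := by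
  induction k generalizing r c with
  | zero => simp [Matrix.one_apply]
  | succ k ih =>
    rw [pow_succ, Matrix.mul_apply]
    have hZ : ∀ a b : ZMod d, Zmat d ω a b = if a = b then ω ^ b.val else 0 := fun _ _ => rfl
    simp only [ih, hZ]
    rw [Finset.sum_eq_single c]
    · by_cases h : r = c <;> simp [h, add_mul, pow_add]
    · intro b _ hb
      simp [hb]
    · simp

lemma weyl_apply (d : ℕ) [NeZero d] (ω : ℂ) (u : ZMod d × ZMod d) (r c : ZMod d) :
    weyl d ω u r c = if r + u.1 = c then ω ^ (u.2.val * c.val) else 0 := by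
  rw [weyl, Matrix.mul_apply]
  simp only [Xpow, Zpow]
  rw [Finset.sum_eq_single c]
  · by_cases h : r + (u.1.val : ZMod d) = c
    · simp only [ZMod.natCast_val, ZMod.cast_id] at h
      simp [h]
    · simp only [ZMod.natCast_val, ZMod.cast_id] at h
      simp [h]
  · intro b _ hb
    simp [hb]
  · simp

lemma charsum (d : ℕ) [NeZero d] (ω : ℂ) (hω : IsPrimitiveRoot ω d) (a b : ℕ)
    (ha : a < d) (hb : b < d) :
    ∑ s : ZMod d, star (ω ^ (a * s.val)) * ω ^ (b * s.val) = if a = b then (d : ℂ) else 0 := by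
  have hd0 : d ≠ 0 := NeZero.ne d
  have hω0 : ω ≠ 0 := hω.ne_zero hd0
  have habs : ‖ω‖ = 1 := Complex.norm_eq_one_of_pow_eq_one hω.pow_eq_one hd0
  have hconj : star ω = ω⁻¹ := by
    rw [Complex.star_def, ← Complex.inv_eq_conj habs]
  set ζ : ℂ := ω ^ ((b : ℤ) - (a : ℤ)) with hζdef
  have hterm : ∀ s : ZMod d, star (ω ^ (a * s.val)) * ω ^ (b * s.val) = ζ ^ s.val := by
    intro s
    rw [star_pow, hconj, hζdef, ← zpow_natCast (ω⁻¹) (a * s.val), ← zpow_natCast ω (b * s.val),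
      _root_.inv_zpow, ← _root_.zpow_neg, ← zpow_add₀ hω0, ← zpow_natCast (ω ^ ((b:ℤ) - a)) s.val,
      ← _root_.zpow_mul]
    congr 1
    push_cast
    ring
  rw [Finset.sum_congr rfl (fun s _ => hterm s)]
  have hsum : ∑ s : ZMod d, ζ ^ s.val = ∑ j ∈ Finset.range d, ζ ^ j := by
    refine Finset.sum_nbij' (fun s => s.val) (fun j => (j : ZMod d)) ?_ ?_ ?_ ?_ ?_
    · intro s _; exact Finset.mem_range.mpr (ZMod.val_lt s)
    · intro j _; exact Finset.mem_univ _
    · intro s _; simp [ZMod.natCast_val, ZMod.cast_id]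
    · intro j hj; exact ZMod.val_cast_of_lt (Finset.mem_range.mp hj)
    · intro s _; rfl
  rw [hsum]
  by_cases hab : a = b
  · have : ζ = 1 := by rw [hζdef, hab, sub_self, zpow_zero]
    simp [this, hab]
  · have hζd : ζ ^ d = 1 := by
      rw [hζdef, ← zpow_natCast (ω ^ ((b:ℤ) - a)) d, ← _root_.zpow_mul, mul_comm, _root_.zpow_mul,
        zpow_natCast, hω.pow_eq_one, _root_.one_zpow]
    have hζ1 : ζ ≠ 1 := by
      intro h
      have hdvd : (d : ℤ) ∣ ((b : ℤ) - a) := (hω.zpow_eq_one_iff_dvd _).mp h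
      have := Int.eq_zero_of_abs_lt_dvd hdvd (by
        rw [abs_lt]; constructor <;> push_cast <;> omega)
      omega
    rw [geom_sum_eq hζ1, hζd, sub_self, zero_div, if_neg hab]

lemma ortho1 (d : ℕ) [NeZero d] (ω : ℂ) (hω : IsPrimitiveRoot ω d) (u v : ZMod d × ZMod d) :
    ∑ r : ZMod d, ∑ c : ZMod d, star (weyl d ω u r c) * weyl d ω v r c
      = if u = v then (d : ℂ) else 0 := by
  simp only [weyl_apply]
  by_cases h1 : u.1 = v.1
  · have hcol : ∀ r : ZMod d,
        (∑ c : ZMod d, star (if r + u.1 = c then ω ^ (u.2.val * c.val) else 0) *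
          (if r + v.1 = c then ω ^ (v.2.val * c.val) else 0))
        = star (ω ^ (u.2.val * (r + u.1).val)) * ω ^ (v.2.val * (r + u.1).val) := by
      intro r
      rw [Finset.sum_eq_single (r + u.1)]
      · rw [if_pos rfl, if_pos (by rw [h1])]
      · intro c _ hc
        rw [if_neg (fun h => hc h.symm), star_zero, zero_mul]
      · simp
    rw [Finset.sum_congr rfl (fun r _ => hcol r)]
    have hre : ∑ r : ZMod d, star (ω ^ (u.2.val * (r + u.1).val)) * ω ^ (v.2.val * (r + u.1).val)
        = ∑ s : ZMod d, star (ω ^ (u.2.val * s.val)) * ω ^ (v.2.val * s.val) :=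
      Fintype.sum_equiv (Equiv.addRight u.1) _ _ (fun r => rfl)
    rw [hre, charsum d ω hω _ _ (ZMod.val_lt _) (ZMod.val_lt _)]
    congr 1
    simp only [eq_iff_iff]
    constructor
    · intro h
      exact Prod.ext h1 (ZMod.val_injective d h)
    · intro h
      rw [h]
  · rw [if_neg (fun h => h1 (by rw [h]))]
    apply Finset.sum_eq_zero
    intro r _
    apply Finset.sum_eq_zero
    intro c _
    by_cases hc : r + u.1 = c
    · rw [if_neg (show ¬ r + v.1 = c from fun h => h1 (add_left_cancel (hc.trans h.symm))),
        mul_zero]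
    · rw [if_neg hc, star_zero, zero_mul]

lemma weylT_sum (d n : ℕ) [NeZero d] (ω : ℂ) (hω : IsPrimitiveRoot ω d)
    (y z : Fin n → ZMod d × ZMod d) :
    ∑ p : (Fin n → ZMod d) × (Fin n → ZMod d),
      star (weylT d n ω y p.2 p.1) * weylT d n ω z p.2 p.1
      = if y = z then ((d : ℂ)) ^ n else 0 := by
  have hterm : ∀ p : (Fin n → ZMod d) × (Fin n → ZMod d),
      star (weylT d n ω y p.2 p.1) * weylT d n ω z p.2 p.1
      = ∏ i, (star (weyl d ω (y i) (p.2 i) (p.1 i)) * weyl d ω (z i) (p.2 i) (p.1 i)) := by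
    intro p
    simp only [weylT, Matrix.of_apply]
    rw [star_prod, ← Finset.prod_mul_distrib]
  rw [Finset.sum_congr rfl (fun p _ => hterm p)]
  have heq : ∑ p : (Fin n → ZMod d) × (Fin n → ZMod d),
      ∏ i, (star (weyl d ω (y i) (p.2 i) (p.1 i)) * weyl d ω (z i) (p.2 i) (p.1 i))
      = ∑ h : Fin n → ZMod d × ZMod d,
      ∏ i, (star (weyl d ω (y i) ((h i).2) ((h i).1)) * weyl d ω (z i) ((h i).2) ((h i).1)) :=
    (Fintype.sum_equiv (Equiv.arrowProdEquivProdArrow (Fin n) (fun _ => ZMod d) (fun _ => ZMod d)) _ _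
      (fun h => rfl)).symm
  rw [heq, ← Fintype.prod_sum (fun (i : Fin n) (q : ZMod d × ZMod d) => star (weyl d ω (y i) q.2 q.1) * weyl d ω (z i) q.2 q.1)]
  have hfac : ∀ i : Fin n, (∑ q : ZMod d × ZMod d,
      star (weyl d ω (y i) q.2 q.1) * weyl d ω (z i) q.2 q.1)
      = if y i = z i then (d : ℂ) else 0 := by
    intro i
    rw [← ortho1 d ω hω (y i) (z i), Fintype.sum_prod_type]
    exact Finset.sum_comm
  rw [Finset.prod_congr rfl (fun i _ => hfac i)]
  by_cases h : y = z
  · simp [h]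
  · obtain ⟨i, hi⟩ := Function.ne_iff.mp h
    rw [if_neg h]
    exact Finset.prod_eq_zero (Finset.mem_univ i) (if_neg hi)

lemma bell_ortho (d n : ℕ) [NeZero d] (ω : ℂ) (hω : IsPrimitiveRoot ω d)
    (y z : Fin n → ZMod d × ZMod d) :
    star (bell d n ω y) ⬝ᵥ bell d n ω z = if y = z then 1 else 0 := by
  have hdn : (0:ℝ) ≤ (d:ℝ) ^ n := by positivity
  have hc : (star ((Real.sqrt (d ^ n) : ℂ))⁻¹) * ((Real.sqrt (d ^ n) : ℂ))⁻¹
      = (((d:ℂ)) ^ n)⁻¹ := by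
    rw [star_inv₀, Complex.star_def, Complex.conj_ofReal, ← mul_inv, ← Complex.ofReal_mul,
      Real.mul_self_sqrt (by push_cast; positivity)]
    push_cast
    ring_nf
  have hd0 : ((d:ℂ)) ^ n ≠ 0 := by
    have : (d:ℂ) ≠ 0 := Nat.cast_ne_zero.mpr (NeZero.ne d)
    positivity
  rw [dotProduct]
  have : ∀ p : (Fin n → ZMod d) × (Fin n → ZMod d),
      star (bell d n ω y) p * bell d n ω z p
      = (((d:ℂ)) ^ n)⁻¹ * (star (weylT d n ω y p.2 p.1) * weylT d n ω z p.2 p.1) := by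
    intro p
    simp only [Pi.star_apply, bell, star_mul']
    rw [← hc]
    ring
  rw [Finset.sum_congr rfl (fun p _ => this p), ← Finset.mul_sum, weylT_sum d n ω hω]
  by_cases h : y = z
  · rw [if_pos h, if_pos h, inv_mul_cancel₀ hd0]
  · rw [if_neg h, if_neg h, mul_zero]

lemma weylT_zero (d n : ℕ) [NeZero d] (ω : ℂ) : weylT d n ω 0 = 1 := by
  ext m l
  rw [weylT, Matrix.of_apply, Matrix.one_apply]
  have h : ∀ i : Fin n, weyl d ω ((0 : Fin n → ZMod d × ZMod d) i) (m i) (l i)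
      = if m i = l i then 1 else 0 := by
    intro i
    rw [weyl_apply]
    simp
  rw [Finset.prod_congr rfl (fun i _ => h i)]
  by_cases h : m = l
  · simp [h]
  · rw [if_neg h]
    obtain ⟨i, hi⟩ := Function.ne_iff.mp h
    exact Finset.prod_eq_zero (Finset.mem_univ i) (if_neg hi)

lemma kron_mulVec_bell0 (d n : ℕ) [NeZero d] (ω : ℂ) (x : Fin n → ZMod d × ZMod d) :
    ((1 : Matrix (Fin n → ZMod d) (Fin n → ZMod d) ℂ) ⊗ₖ weylT d n ω x).mulVec
      (bell d n ω 0) = bell d n ω x := by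
  ext p
  rw [Matrix.mulVec, dotProduct, Fintype.sum_prod_type]
  have hterm : ∀ a b : Fin n → ZMod d,
      ((1 : Matrix (Fin n → ZMod d) (Fin n → ZMod d) ℂ) ⊗ₖ weylT d n ω x) p (a, b) *
        bell d n ω 0 (a, b)
      = ((1 : Matrix (Fin n → ZMod d) (Fin n → ZMod d) ℂ) p.1 a * weylT d n ω x p.2 b) *
        ((Real.sqrt (d ^ n) : ℂ)⁻¹ * (if b = a then 1 else 0)) := by
    intro a b
    rw [Matrix.kroneckerMap_apply, bell, weylT_zero]
    simp [Matrix.one_apply]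
  rw [Finset.sum_congr rfl (fun a _ => Finset.sum_congr rfl (fun b _ => hterm a b))]
  have hinner : ∀ a : Fin n → ZMod d,
      (∑ b : Fin n → ZMod d,
        ((1 : Matrix (Fin n → ZMod d) (Fin n → ZMod d) ℂ) p.1 a * weylT d n ω x p.2 b) *
        ((Real.sqrt (d ^ n) : ℂ)⁻¹ * (if b = a then 1 else 0)))
      = (1 : Matrix (Fin n → ZMod d) (Fin n → ZMod d) ℂ) p.1 a *
        ((Real.sqrt (d ^ n) : ℂ)⁻¹ * weylT d n ω x p.2 a) := by
    intro a
    rw [Finset.sum_eq_single a]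
    · rw [if_pos rfl, mul_one]; ring
    · intro b _ hb; rw [if_neg hb, mul_zero, mul_zero]
    · simp
  rw [Finset.sum_congr rfl (fun a _ => hinner a), Finset.sum_eq_single p.1]
  · rw [Matrix.one_apply_eq, one_mul, bell]
  · intro a _ ha
    rw [Matrix.one_apply_ne (fun h => ha h.symm), zero_mul]
  · simp

lemma conj_vecMulVec {P : Type*} [Fintype P] (K : Matrix P P ℂ) (u v : P → ℂ) :
    K * Matrix.vecMulVec u (star v) * Kᴴ
      = Matrix.vecMulVec (K.mulVec u) (star (K.mulVec v)) := by
  ext p q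
  simp only [Matrix.mul_apply, Matrix.conjTranspose_apply, Matrix.vecMulVec_apply,
    Pi.star_apply, Matrix.mulVec, dotProduct, star_sum, star_mul']
  rw [Finset.sum_mul_sum]
  simp only [Finset.sum_mul]
  rw [Finset.sum_comm]
  exact Finset.sum_congr rfl fun r _ => Finset.sum_congr rfl fun s _ => by ring

lemma dyad_mulVec {P : Type*} [Fintype P] (u v w : P → ℂ) :
    (Matrix.vecMulVec u (star v)).mulVec w = (star v ⬝ᵥ w) • u := by
  ext i
  rw [Pi.smul_apply, smul_eq_mul, dotProduct, Finset.sum_mul]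
  simp only [Matrix.mulVec, dotProduct, Matrix.vecMulVec_apply, Pi.star_apply]
  exact Finset.sum_congr rfl fun j _ => by ring

noncomputable def Emap (d n : ℕ) [NeZero d] (ω : ℂ) (y z : Fin n → ZMod d × ZMod d) :
    Matrix ((Fin n → ZMod d) × (Fin n → ZMod d)) ((Fin n → ZMod d) × (Fin n → ZMod d)) ℂ
      →ₗ[ℂ] ℂ where
  toFun M := star (bell d n ω y) ⬝ᵥ M.mulVec (bell d n ω z)
  map_add' A B := by rw [Matrix.add_mulVec, dotProduct_add]
  map_smul' c A := by
    rw [Matrix.smul_mulVec, dotProduct_smul, smul_eq_mul, RingHom.id_apply,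
      smul_eq_mul]

lemma Emap_dyad (d n : ℕ) [NeZero d] (ω : ℂ) (hω : IsPrimitiveRoot ω d)
    (y z a b : Fin n → ZMod d × ZMod d) :
    Emap d n ω y z (Matrix.vecMulVec (bell d n ω a) (star (bell d n ω b)))
      = (if y = a then 1 else 0) * (if b = z then 1 else 0) := by
  show star (bell d n ω y) ⬝ᵥ _ = _
  rw [dyad_mulVec, dotProduct_smul, smul_eq_mul, bell_ortho d n ω hω,
    bell_ortho d n ω hω]
  ring

lemma Emap_decomp (d n : ℕ) [NeZero d] (ω : ℂ) (hω : IsPrimitiveRoot ω d)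
    (α : (Fin n → ZMod d × ZMod d) → (Fin n → ZMod d × ZMod d) → ℂ)
    (y z : Fin n → ZMod d × ZMod d) :
    Emap d n ω y z (∑ a : Fin n → ZMod d × ZMod d, ∑ b : Fin n → ZMod d × ZMod d,
      α a b • Matrix.vecMulVec (bell d n ω a) (star (bell d n ω b))) = α y z := by
  rw [map_sum]
  rw [Finset.sum_congr rfl (fun a _ => map_sum _ _ _)]
  have h : ∀ a b, Emap d n ω y z
      (α a b • Matrix.vecMulVec (bell d n ω a) (star (bell d n ω b)))
      = α a b * ((if y = a then 1 else 0) * (if b = z then 1 else 0)) := by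
    intro a b
    rw [_root_.map_smul, smul_eq_mul, Emap_dyad d n ω hω]
  rw [Finset.sum_congr rfl (fun a _ => Finset.sum_congr rfl (fun b _ => h a b))]
  rw [Finset.sum_eq_single y]
  · rw [Finset.sum_eq_single z]
    · simp
    · intro b _ hb; rw [if_neg hb, mul_zero, mul_zero]
    · simp
  · intro a _ ha
    apply Finset.sum_eq_zero
    intro b _
    rw [if_neg (fun h' => ha h'.symm), zero_mul, mul_zero]
  · simp

/-- `Γ(Λ_{σ_n}) = σ_n` iff the Bell-basis matrix `(α_{y,z})` is diagonal,
where `Γ(A) = (Id ⊗ A)(|Ψ_0⟩⟨Ψ_0|)`. -/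
theorem stmt11 (d n : ℕ) [NeZero d] (hd : 2 ≤ d) (ω : ℂ) (hω : IsPrimitiveRoot ω d)
    (σ : Matrix ((Fin n → ZMod d) × (Fin n → ZMod d)) ((Fin n → ZMod d) × (Fin n → ZMod d)) ℂ)
    (hpsd : σ.PosSemidef) (htr : σ.trace = 1)
    (α : (Fin n → ZMod d × ZMod d) → (Fin n → ZMod d × ZMod d) → ℂ)
    (hσ : σ = ∑ y : Fin n → ZMod d × ZMod d, ∑ z : Fin n → ZMod d × ZMod d,
      α y z • Matrix.vecMulVec (bell d n ω y) (star (bell d n ω z))) :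
    ((∑ x : Fin n → ZMod d × ZMod d, braket d n ω σ x •
        (((1 : Matrix (Fin n → ZMod d) (Fin n → ZMod d) ℂ) ⊗ₖ weylT d n ω x) *
          Matrix.vecMulVec (bell d n ω 0) (star (bell d n ω 0)) *
          ((1 : Matrix (Fin n → ZMod d) (Fin n → ZMod d) ℂ) ⊗ₖ weylT d n ω x)ᴴ)) = σ)
      ↔ ∀ y z : Fin n → ZMod d × ZMod d, y ≠ z → α y z = 0 := by
  
  have hbraket : ∀ x, braket d n ω σ x = α x x := by
    intro x
    rw [braket, hσ]
    exact Emap_decomp d n ω hω α x x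
  have hconj : ∀ x : Fin n → ZMod d × ZMod d,
      ((1 : Matrix (Fin n → ZMod d) (Fin n → ZMod d) ℂ) ⊗ₖ weylT d n ω x) *
        Matrix.vecMulVec (bell d n ω 0) (star (bell d n ω 0)) *
        ((1 : Matrix (Fin n → ZMod d) (Fin n → ZMod d) ℂ) ⊗ₖ weylT d n ω x)ᴴ
      = Matrix.vecMulVec (bell d n ω x) (star (bell d n ω x)) := by
    intro x
    rw [conj_vecMulVec, kron_mulVec_bell0]
  have hLHS : (∑ x : Fin n → ZMod d × ZMod d, braket d n ω σ x •
        (((1 : Matrix (Fin n → ZMod d) (Fin n → ZMod d) ℂ) ⊗ₖ weylT d n ω x) *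
          Matrix.vecMulVec (bell d n ω 0) (star (bell d n ω 0)) *
          ((1 : Matrix (Fin n → ZMod d) (Fin n → ZMod d) ℂ) ⊗ₖ weylT d n ω x)ᴴ))
      = ∑ x : Fin n → ZMod d × ZMod d,
          α x x • Matrix.vecMulVec (bell d n ω x) (star (bell d n ω x)) :=
    Finset.sum_congr rfl fun x _ => by rw [hbraket, hconj]
  rw [hLHS]
  constructor
  · intro h y z hyz
    have h2 := congrArg (Emap d n ω y z) h
    rw [map_sum] at h2
    have h3 : ∀ x : Fin n → ZMod d × ZMod d,
        Emap d n ω y z (α x x • Matrix.vecMulVec (bell d n ω x) (star (bell d n ω x)))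
        = α x x * ((if y = x then 1 else 0) * (if x = z then 1 else 0)) := fun x => by
      rw [_root_.map_smul, smul_eq_mul, Emap_dyad d n ω hω]
    rw [Finset.sum_congr rfl fun x _ => h3 x] at h2
    have h4 : (∑ x : Fin n → ZMod d × ZMod d,
        α x x * ((if y = x then 1 else 0) * (if x = z then 1 else 0))) = 0 := by
      apply Finset.sum_eq_zero
      intro x _
      by_cases hx : y = x
      · rw [if_neg (fun hz => hyz (hx.trans hz)), mul_zero, mul_zero]
      · rw [if_neg hx, zero_mul, mul_zero]
    rw [h4] at h2
    have h5 : Emap d n ω y z σ = α y z := by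
      rw [hσ]
      exact Emap_decomp d n ω hω α y z
    rw [h5] at h2
    exact h2.symm
  · intro hdiag
    rw [hσ]
    have hinner : ∀ y : Fin n → ZMod d × ZMod d,
        (∑ z : Fin n → ZMod d × ZMod d,
          α y z • Matrix.vecMulVec (bell d n ω y) (star (bell d n ω z)))
        = α y y • Matrix.vecMulVec (bell d n ω y) (star (bell d n ω y)) := by
      intro y
      apply Finset.sum_eq_single
      · intro z _ hz
        rw [hdiag y z (fun h => hz h.symm), zero_smul]
      · intro hy
        exact absurd (Finset.mem_univ y) hy
    rw [Finset.sum_congr rfl fun y _ => hinner y]
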